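/- If w is small-height-containing (i.e., w = u s_β v with ℓ(w) = ℓ(u) + ℓ(s_β) + ℓ(v) for some non-simple reflection s_β with ℓ(s_β) = ⟨2ρ, β∨⟩ − 1), then d_Γ(w, 1) ≤ ℓ(w) − 2. -/

import Mathlib

open Finset

noncomputable section

namespace QBG

/-- The root system of the older Mathlib: a root pairing whose roots span. -/
structure RootSystem (ι R M N : Type*) [CommRing R] [AddCommGroup M] [Module R M]
    [AddCommGroup N] [Module R N] extends RootPairing ι R M N where
  span_eq_top : Submodule.span R (Set.range root) = ⊤

variable {ι V V' : Type*} [Fintype ι] [AddCommGroup V] [Module ℝ V]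
  [AddCommGroup V'] [Module ℝ V']

variable (P : RootSystem ι ℝ V V') (f : V →ₗ[ℝ] ℝ)

/-- `k` indexes a positive root (w.r.t. the regular linear functional `f`). -/
def Pos (k : ι) : Prop := 0 < f (P.root k)

/-- `k` indexes a simple root: positive and not a sum of two positive roots. -/
def IsSimple (k : ι) : Prop := Pos P f k ∧
  ¬ ∃ i j : ι, Pos P f i ∧ Pos P f j ∧ P.root k = P.root i + P.root j

/-- The reflection `s_α` associated to the root indexed by `k`. -/
def refl (k : ι) : V ≃ₗ[ℝ] V := P.reflection k

/-- `l` is a word in simple reflections with product `w`. -/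
def Wrd (w : V ≃ₗ[ℝ] V) (l : List ι) : Prop :=
  (∀ i ∈ l, IsSimple P f i) ∧ (l.map (refl P)).prod = w

/-- `w` lies in the Weyl group (generated by simple reflections). -/
def InW (w : V ≃ₗ[ℝ] V) : Prop := ∃ l, Wrd P f w l

/-- Coxeter length of `w` with respect to the simple reflections. -/
def len (w : V ≃ₗ[ℝ] V) : ℕ := sInf {n | ∃ l, Wrd P f w l ∧ l.length = n}

/-- The pairing `⟨2ρ, α_k^∨⟩` where `ρ` is the half-sum of positive roots. -/
def tworho (k : ι) : ℝ := ∑ i, if 0 < f (P.root i) then P.pairing i k else 0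

/-- An upward edge of the quantum Bruhat graph, from `w`, labeled `k`. -/
def UpStep (w : V ≃ₗ[ℝ] V) (k : ι) : Prop :=
  Pos P f k ∧ len P f (w * refl P k) = len P f w + 1

/-- A downward edge of the quantum Bruhat graph, from `w`, labeled `k`. -/
def DownStep (w : V ≃ₗ[ℝ] V) (k : ι) : Prop :=
  Pos P f k ∧ (len P f (w * refl P k) : ℝ) = (len P f w : ℝ) - tworho P f k + 1

/-- An edge of the quantum Bruhat graph, from `w`, labeled `k`. -/
def Step (w : V ≃ₗ[ℝ] V) (k : ι) : Prop := UpStep P f w k ∨ DownStep P f w k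

/-- `ks` is the list of labels of a directed path in the quantum Bruhat graph
starting at `w`. -/
def ValidPath : (V ≃ₗ[ℝ] V) → List ι → Prop
  | _, [] => True
  | w, k :: ks => Step P f w k ∧ ValidPath (w * refl P k) ks

/-- `ks` is the list of labels of an all-downward path starting at `w`. -/
def DownPath : (V ≃ₗ[ℝ] V) → List ι → Prop
  | _, [] => True
  | w, k :: ks => DownStep P f w k ∧ DownPath (w * refl P k) ks

/-- `ks` is the list of labels of an all-upward path starting at `w`. -/
def UpPath : (V ≃ₗ[ℝ] V) → List ι → Prop
  | _, [] => True
  | w, k :: ks => UpStep P f w k ∧ UpPath (w * refl P k) ks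

/-- The endpoint of the path starting at `w` with edge labels `ks`. -/
def pathEnd (w : V ≃ₗ[ℝ] V) (ks : List ι) : V ≃ₗ[ℝ] V := w * (ks.map (refl P)).prod

/-- The distance `d_Γ(u,v)` in the quantum Bruhat graph. -/
def dist (u v : V ≃ₗ[ℝ] V) : ℕ :=
  sInf {n | ∃ ks, ValidPath P f u ks ∧ pathEnd P u ks = v ∧ ks.length = n}

/-- The all-downward distance `d_↓(w)` from `w` to the identity. -/
def ddown (w : V ≃ₗ[ℝ] V) : ℕ :=
  sInf {n | ∃ ks, DownPath P f w ks ∧ pathEnd P w ks = 1 ∧ ks.length = n}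

open Classical in
/-- The pairing of `2ρ` with the weight of the path `(w, ks)`, i.e. the sum of
`⟨2ρ, α^∨⟩` over the downward edges of the path. -/
def downWeight : (V ≃ₗ[ℝ] V) → List ι → ℝ
  | _, [] => 0
  | w, k :: ks =>
      (if UpStep P f w k then 0 else tworho P f k) + downWeight (w * refl P k) ks

/-- `w` contains `v`: `w = u * v * u'` length-additively. -/
def Contains (w v : V ≃ₗ[ℝ] V) : Prop :=
  ∃ u u', InW P f u ∧ InW P f u' ∧ w = u * v * u' ∧
    len P f w = len P f u + len P f v + len P f u'

/-- `w` is small-height-avoiding: it contains no non-simple reflection `s_β`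
with `ℓ(s_β) = ⟨2ρ, β^∨⟩ - 1`. -/
def SmallHeightAvoiding (w : V ≃ₗ[ℝ] V) : Prop :=
  ¬ ∃ k : ι, Pos P f k ∧ ¬ IsSimple P f k ∧
      (len P f (refl P k) : ℝ) = tworho P f k - 1 ∧ Contains P f w (refl P k)

/-- The root system `P` is reduced. -/
def Reduced : Prop := ∀ i j : ι, P.root i ≠ (2 : ℝ) • P.root j

/-- The linear functional `f` is regular: it vanishes on no root. -/
def Regular : Prop := ∀ i : ι, f (P.root i) ≠ 0


set_option linter.unusedSectionVars false
set_option maxHeartbeats 1000000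

section Lemmas
variable {P} {f}

/- ## Word and length infrastructure -/

lemma refl_mul_self (k : ι) : refl P k * refl P k = 1 := by
  rw [← sq]; exact P.reflection_sq k

lemma wrd_nil : Wrd P f 1 [] := ⟨by simp, rfl⟩

lemma Wrd.append {w w' : V ≃ₗ[ℝ] V} {l l'} (h : Wrd P f w l) (h' : Wrd P f w' l') :
    Wrd P f (w * w') (l ++ l') := by
  refine ⟨fun i hi => ?_, by rw [List.map_append, List.prod_append, h.2, h'.2]⟩
  rcases List.mem_append.1 hi with hi | hi
  exacts [h.1 i hi, h'.1 i hi]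

lemma Wrd.mul_refl {w : V ≃ₗ[ℝ] V} {l} (h : Wrd P f w l) {i : ι} (hi : IsSimple P f i) :
    Wrd P f (w * refl P i) (l ++ [i]) :=
  h.append ⟨by simpa using hi, by simp⟩

lemma len_le_of_wrd {w : V ≃ₗ[ℝ] V} {l} (h : Wrd P f w l) : len P f w ≤ l.length :=
  Nat.sInf_le ⟨l, h, rfl⟩

lemma InW.exists_wrd {w : V ≃ₗ[ℝ] V} (hw : InW P f w) :
    ∃ l, Wrd P f w l ∧ l.length = len P f w := by
  have : {n | ∃ l, Wrd P f w l ∧ l.length = n}.Nonempty := by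
    obtain ⟨l, hl⟩ := hw; exact ⟨l.length, l, hl, rfl⟩
  exact Nat.sInf_mem this

lemma len_one : len P f (1 : V ≃ₗ[ℝ] V) = 0 :=
  Nat.le_zero.1 (len_le_of_wrd (wrd_nil))

lemma InW.mul {w w' : V ≃ₗ[ℝ] V} (h : InW P f w) (h' : InW P f w') : InW P f (w * w') := by
  obtain ⟨l, hl⟩ := h; obtain ⟨l', hl'⟩ := h'; exact ⟨l ++ l', hl.append hl'⟩

lemma InW.inv {w : V ≃ₗ[ℝ] V} (h : InW P f w) : InW P f w⁻¹ := by
  obtain ⟨l, hl⟩ := h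
  refine ⟨l.reverse, fun i hi => hl.1 i (List.mem_reverse.1 hi), ?_⟩
  have key : ∀ l : List ι, ((l.reverse.map (refl P)).prod) * ((l.map (refl P)).prod) = 1 := by
    intro l
    induction l with
    | nil => simp
    | cons a t ih =>
        simp only [List.reverse_cons, List.map_append, List.prod_append, List.map_cons,
          List.prod_cons, List.map_nil, List.prod_nil, mul_one]
        rw [mul_assoc, ← mul_assoc (refl P a), refl_mul_self, one_mul, ih]
  have := key l
  rw [hl.2] at this
  exact eq_inv_of_mul_eq_one_left this

lemma len_mul_le {w w' : V ≃ₗ[ℝ] V} (h : InW P f w) (h' : InW P f w') :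
    len P f (w * w') ≤ len P f w + len P f w' := by
  obtain ⟨l, hl, hll⟩ := h.exists_wrd
  obtain ⟨l', hl', hll'⟩ := h'.exists_wrd
  simpa [hll, hll'] using len_le_of_wrd (hl.append hl')

lemma len_eq_zero {w : V ≃ₗ[ℝ] V} (h : InW P f w) (h0 : len P f w = 0) : w = 1 := by
  obtain ⟨l, hl, hll⟩ := h.exists_wrd
  rw [h0, List.length_eq_zero_iff] at hll
  subst hll; exact hl.2.symm

/- ## Root form infrastructure -/

lemma rootFormSymm (x y : V) : P.RootForm x y = P.RootForm y x := by
  simp [RootPairing.rootForm_apply_apply, mul_comm]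

lemma rootForm_pairing (i j : ι) :
    P.RootForm (P.root i) (P.root i) * P.pairing j i
      = 2 * P.RootForm (P.root i) (P.root j) := by
  have h := congrArg (fun y => P.root' j y) (P.rootForm_self_smul_coroot i)
  simp only [map_smul, map_nsmul, smul_eq_mul, nsmul_eq_mul, Nat.cast_ofNat,
    RootPairing.root'_coroot_eq_pairing, RootPairing.Polarization_apply, map_sum,
    RootPairing.rootForm_apply_apply] at h ⊢
  rw [h]
  congr 1

lemma prop_or_lt (i j : ι) :
    (∃ t : ℝ, P.root j = t • P.root i) ∨ P.pairing j i * P.pairing i j < 4 := by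
  have ha0 : 0 < P.RootForm (P.root i) (P.root i) := P.rootForm_pos_of_ne_zero (Submodule.subset_span ⟨i, rfl⟩) (P.ne_zero i)
  have hc0 : 0 < P.RootForm (P.root j) (P.root j) := P.rootForm_pos_of_ne_zero (Submodule.subset_span ⟨j, rfl⟩) (P.ne_zero j)
  have h1 : P.RootForm (P.root i) (P.root i) * P.pairing j i
      = 2 * P.RootForm (P.root i) (P.root j) := rootForm_pairing i j
  have h2 : P.RootForm (P.root j) (P.root j) * P.pairing i j
      = 2 * P.RootForm (P.root i) (P.root j) := by rw [rootForm_pairing j i, rootFormSymm]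
  have hbs : P.RootForm (P.root j) (P.root i) = P.RootForm (P.root i) (P.root j) :=
    rootFormSymm _ _
  have h0 := P.zero_le_rootForm
    (P.RootForm (P.root i) (P.root i) • P.root j - P.RootForm (P.root i) (P.root j) • P.root i)
  simp only [map_sub, map_smul, LinearMap.sub_apply, LinearMap.smul_apply, smul_eq_mul] at h0
  rw [hbs] at h0
  by_cases hbac : P.RootForm (P.root i) (P.root j) ^ 2
      = P.RootForm (P.root i) (P.root i) * P.RootForm (P.root j) (P.root j)
  · left
    have hz : P.RootForm
        (P.RootForm (P.root i) (P.root i) • P.root j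
          - P.RootForm (P.root i) (P.root j) • P.root i)
        (P.RootForm (P.root i) (P.root i) • P.root j
          - P.RootForm (P.root i) (P.root j) • P.root i) = 0 := by
      simp only [map_sub, map_smul, LinearMap.sub_apply, LinearMap.smul_apply, smul_eq_mul]
      rw [hbs]
      linear_combination (-(P.RootForm (P.root i) (P.root i))) * hbac
    have hz0 := P.eq_zero_of_mem_rootSpan_of_rootForm_self_eq_zero
        (by rw [RootPairing.rootSpan, P.span_eq_top]; exact Submodule.mem_top) hz
    have heq : P.RootForm (P.root i) (P.root i) • P.root j
        = P.RootForm (P.root i) (P.root j) • P.root i := sub_eq_zero.mp hz0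
    refine ⟨P.RootForm (P.root i) (P.root j) / P.RootForm (P.root i) (P.root i), ?_⟩
    rw [div_eq_inv_mul, mul_smul, ← heq, inv_smul_smul₀ (ne_of_gt ha0)]
  · right
    have hle : P.RootForm (P.root i) (P.root j) ^ 2
        ≤ P.RootForm (P.root i) (P.root i) * P.RootForm (P.root j) (P.root j) := by
      nlinarith [h0, ha0]
    have hlt := lt_of_le_of_ne hle hbac
    have key : (P.RootForm (P.root i) (P.root i) * P.RootForm (P.root j) (P.root j))
        * (P.pairing j i * P.pairing i j) = 4 * P.RootForm (P.root i) (P.root j) ^ 2 := by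
      linear_combination (P.RootForm (P.root j) (P.root j) * P.pairing i j) * h1
        + (2 * P.RootForm (P.root i) (P.root j)) * h2
    nlinarith [key, hlt, mul_pos ha0 hc0]

lemma pairing_of_prop {i j : ι} {t : ℝ} (h : P.root j = t • P.root i) :
    P.pairing j i = 2 * t ∧ t * P.pairing i j = 2 := by
  constructor
  · have h2 : P.coroot' i (P.root j) = t * P.coroot' i (P.root i) := by rw [h, map_smul]; rfl
    rw [P.root_coroot'_eq_pairing, P.root_coroot'_eq_pairing, P.pairing_same] at h2
    rw [h2]; ring
  · have h2 : P.coroot' j (P.root j) = t * P.coroot' j (P.root i) := by rw [h, map_smul]; rfl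
    rw [P.root_coroot'_eq_pairing, P.root_coroot'_eq_pairing, P.pairing_same] at h2
    exact h2.symm

lemma pairing_pos_of_pos {i j : ι} (h : 0 < P.pairing j i) : 0 < P.pairing i j := by
  have ha0 : 0 < P.RootForm (P.root i) (P.root i) := P.rootForm_pos_of_ne_zero (Submodule.subset_span ⟨i, rfl⟩) (P.ne_zero i)
  have hc0 : 0 < P.RootForm (P.root j) (P.root j) := P.rootForm_pos_of_ne_zero (Submodule.subset_span ⟨j, rfl⟩) (P.ne_zero j)
  have h1 := rootForm_pairing (P := P) i j
  have h2 : P.RootForm (P.root j) (P.root j) * P.pairing i j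
      = 2 * P.RootForm (P.root i) (P.root j) := by rw [rootForm_pairing j i, rootFormSymm]
  nlinarith

lemma pairing_int (hP : P.IsCrystallographic) (i j : ι) : ∃ z : ℤ, (z : ℝ) = P.pairing i j :=
  by obtain ⟨s, hs⟩ := hP.exists_value i j; exact ⟨s, by rw [← hs]; simp⟩

/-- The index of `-α_i`. -/
def negIdx (i : ι) : ι := P.reflectionPerm i i

lemma root_negIdx (i : ι) : P.root (negIdx (P := P) i) = -P.root i := by
  rw [negIdx, P.root_reflectionPerm, P.reflection_apply_self]

lemma root_reflection_perm' (a j : ι) :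
    P.root (P.reflectionPerm a j) = P.root j - P.pairing j a • P.root a := by
  rw [P.root_reflectionPerm, P.reflection_apply_root]

end Lemmas

section Lemmas2
variable {P} {f}

lemma f_root_perm (a j : ι) :
    f (P.root (P.reflectionPerm a j)) = f (P.root j) - P.pairing j a * f (P.root a) := by
  rw [root_reflection_perm', map_sub, map_smul, smul_eq_mul]

lemma f_root_negIdx (i : ι) : f (P.root (negIdx (P := P) i)) = - f (P.root i) := by
  rw [root_negIdx, map_neg]

lemma pairing_perm_left (a i k : ι) :
    P.pairing (P.reflectionPerm a i) k = P.pairing i k - P.pairing i a * P.pairing a k := by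
  rw [← P.root_coroot'_eq_pairing, root_reflection_perm', map_sub, map_smul, smul_eq_mul,
    P.root_coroot'_eq_pairing, P.root_coroot'_eq_pairing]

lemma pairing_negIdx_left (m k : ι) :
    P.pairing (negIdx (P := P) m) k = - P.pairing m k :=
  P.pairing_reflectionPerm_self_left m k

lemma prop_resolve (hP : P.IsCrystallographic) (hred : Reduced P) {i j : ι} {t : ℝ}
    (hprop : P.root j = t • P.root i) : j = i ∨ P.root j = -P.root i := by
  obtain ⟨hji, hij⟩ := pairing_of_prop hprop
  have hi0 : P.root i ≠ 0 := P.ne_zero i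
  have hj0 : P.root j ≠ 0 := P.ne_zero j
  have ht0 : t ≠ 0 := by rintro rfl; rw [zero_smul] at hprop; exact hj0 hprop
  obtain ⟨zc, hzc⟩ := pairing_int hP j i
  obtain ⟨zc', hzc'⟩ := pairing_int hP i j
  have hm : P.pairing j i * P.pairing i j = 4 := by
    linear_combination (P.pairing i j) * hji + 2 * hij
  have hmul : zc * zc' = 4 := by
    have : ((zc * zc' : ℤ) : ℝ) = ((4 : ℤ) : ℝ) := by push_cast; rw [hzc, hzc']; linarith [hm]
    exact_mod_cast this
  have h2t : (zc : ℝ) = 2 * t := by rw [hzc, hji]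
  have h4 : zc ∣ 4 := ⟨zc', hmul.symm⟩
  have hb1 : zc ≤ 4 := Int.le_of_dvd (by norm_num) h4
  have hb2 : -4 ≤ zc := by
    have h4' : -zc ∣ 4 := (neg_dvd).mpr h4
    have := Int.le_of_dvd (by norm_num) h4'
    omega
  interval_cases zc
  · -- zc = -4, t = -2
    have ht : t = -2 := by
      have : ((-4 : ℤ) : ℝ) = 2 * t := h2t
      push_cast at this; linarith
    exfalso
    refine hred j (negIdx (P := P) i) ?_
    rw [root_negIdx, hprop, ht]
    module
  · omega
  · -- zc = -2, t = -1
    have ht : t = -1 := by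
      have : ((-2 : ℤ) : ℝ) = 2 * t := h2t
      push_cast at this; linarith
    right; rw [hprop, ht]; module
  · -- zc = -1, t = -1/2 : root i = -2 root j
    have ht : t = -(1/2) := by
      have : ((-1 : ℤ) : ℝ) = 2 * t := h2t
      push_cast at this; linarith
    exfalso
    refine hred i (negIdx (P := P) j) ?_
    rw [root_negIdx, hprop, ht]
    module
  · omega
  · -- zc = 1, t = 1/2 : root i = 2 root j
    have ht : t = 1/2 := by
      have : ((1 : ℤ) : ℝ) = 2 * t := h2t
      push_cast at this; linarith
    exfalso
    refine hred i j ?_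
    rw [hprop, ht]
    module
  · -- zc = 2, t = 1
    have ht : t = 1 := by
      have : ((2 : ℤ) : ℝ) = 2 * t := h2t
      push_cast at this; linarith
    left
    refine P.root.injective ?_
    rw [hprop, ht, one_smul]
  · omega
  · -- zc = 4, t = 2
    have ht : t = 2 := by
      have : ((4 : ℤ) : ℝ) = 2 * t := h2t
      push_cast at this; linarith
    exfalso
    refine hred j i ?_
    rw [hprop, ht]

lemma pos_reflection_of_simple (hP : P.IsCrystallographic) (hred : Reduced P)
    (hreg : Regular P f) {a : ι} (ha : IsSimple P f a) :
    ∀ j, Pos P f j → j ≠ a → Pos P f (P.reflectionPerm a j) := by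
  classical
  suffices H : ∀ n j, (Finset.univ.filter
      (fun m => Pos P f m ∧ f (P.root m) < f (P.root j))).card = n →
      Pos P f j → j ≠ a → Pos P f (P.reflectionPerm a j) by
    intro j; exact H _ j rfl
  intro n
  induction n using Nat.strong_induction_on with
  | _ n IH =>
  intro j hcard hj hja
  have hfa : 0 < f (P.root a) := ha.1
  have hval : f (P.root (P.reflectionPerm a j))
      = f (P.root j) - P.pairing j a * f (P.root a) := f_root_perm a j
  have hj' : 0 < f (P.root j) := hj
  by_cases hc : P.pairing j a ≤ 0
  · show 0 < f (P.root (P.reflectionPerm a j))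
    nlinarith [hj', mul_nonneg (neg_nonneg.mpr hc) (le_of_lt hfa)]
  push_neg at hc
  by_contra hneg
  have hneg' : f (P.root (P.reflectionPerm a j)) < 0 :=
    lt_of_le_of_ne (not_lt.mp hneg) (hreg (P.reflectionPerm a j))
  rcases prop_or_lt (P := P) a j with ⟨t, hprop⟩ | hlt
  · rcases prop_resolve hP hred hprop with rfl | hneg2
    · exact hja rfl
    · rw [hneg2, map_neg] at hj'; linarith
  · have hc' : 0 < P.pairing a j := pairing_pos_of_pos hc
    obtain ⟨zc, hzc⟩ := pairing_int hP j a
    obtain ⟨zc', hzc'⟩ := pairing_int hP a j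
    have hzc1 : 1 ≤ zc := by
      have h0 : (0:ℝ) < zc := by rw [hzc]; exact hc
      have : 0 < zc := by exact_mod_cast h0
      omega
    have hzc'1 : 1 ≤ zc' := by
      have h0 : (0:ℝ) < zc' := by rw [hzc']; exact hc'
      have : 0 < zc' := by exact_mod_cast h0
      omega
    by_cases h1 : zc = 1
    · -- pairing j a = 1, so s_a(root j) = root j - root a and root a = (root a - root j) + root j
      have hc1 : P.pairing j a = 1 := by rw [← hzc, h1, Int.cast_one]
      refine ha.2 ⟨negIdx (P := P) (P.reflectionPerm a j), j, ?_, hj, ?_⟩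
      · show 0 < f (P.root (negIdx (P := P) (P.reflectionPerm a j)))
        rw [f_root_negIdx]; linarith
      · rw [root_negIdx, root_reflection_perm', hc1, one_smul]
        module
    · have hzc2 : 2 ≤ zc := by omega
      have hmul_lt : (zc : ℝ) * (zc' : ℝ) < 4 := by rw [hzc, hzc']; exact hlt
      have hmlt : zc * zc' < 4 := by exact_mod_cast hmul_lt
      have hzc'eq : zc' = 1 := by nlinarith
      have hc'1 : P.pairing a j = 1 := by rw [← hzc', hzc'eq, Int.cast_one]
      -- root (σ j a) = root a - root j
      have hsja : P.root (P.reflectionPerm j a) = P.root a - P.root j := by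
        rw [root_reflection_perm', hc'1, one_smul]
      rcases (hreg (P.reflectionPerm j a)).lt_or_gt with hlt2 | hgt2
      · -- f(root a - root j) < 0 : use induction on d with root d = root j - root a
        set d := negIdx (P := P) (P.reflectionPerm j a) with hd_def
        have hd : P.root d = P.root j - P.root a := by
          rw [hd_def, root_negIdx, hsja]; module
        have hdpos : Pos P f d := by
          show 0 < f (P.root d)
          rw [hd_def, f_root_negIdx]; linarith
        have hfd : f (P.root d) < f (P.root j) := by
          rw [hd, map_sub]; linarith
        have hdne : d ≠ a := by
          intro h
          refine hred j a ?_
          have : P.root j - P.root a = P.root a := by rw [← hd, h]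
          rw [sub_eq_iff_eq_add] at this
          rw [this]; module
        -- measure decreases
        have hsub : (Finset.univ.filter
            (fun m => Pos P f m ∧ f (P.root m) < f (P.root d))) ⊆
            (Finset.univ.filter (fun m => Pos P f m ∧ f (P.root m) < f (P.root j))) := by
          intro m hm
          simp only [Finset.mem_filter, Finset.mem_univ, true_and] at hm ⊢
          exact ⟨hm.1, hm.2.trans hfd⟩
        have hmem : d ∈ Finset.univ.filter
            (fun m => Pos P f m ∧ f (P.root m) < f (P.root j)) := by
          simp only [Finset.mem_filter, Finset.mem_univ, true_and]
          exact ⟨hdpos, hfd⟩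
        have hnmem : d ∉ Finset.univ.filter
            (fun m => Pos P f m ∧ f (P.root m) < f (P.root d)) := by
          simp only [Finset.mem_filter, Finset.mem_univ, true_and]
          rintro ⟨-, h⟩; exact lt_irrefl _ h
        have hlt_card : (Finset.univ.filter
            (fun m => Pos P f m ∧ f (P.root m) < f (P.root d))).card < n := by
          rw [← hcard]
          exact Finset.card_lt_card ((Finset.ssubset_iff_of_subset hsub).mpr
            ⟨d, hmem, hnmem⟩)
        have hind := IH _ hlt_card d rfl hdpos hdne
        -- root a = (pairing j a • root a - root j) + (root j - (pairing j a - 1) • root a)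
        have hpd : P.pairing d a = P.pairing j a - 2 := by
          have := congrArg (fun x => P.coroot' a x) hd
          simp only [map_sub] at this
          rw [P.root_coroot'_eq_pairing, P.root_coroot'_eq_pairing,
            P.root_coroot'_eq_pairing, P.pairing_same] at this
          exact this
        refine ha.2 ⟨negIdx (P := P) (P.reflectionPerm a j), P.reflectionPerm a d,
          ?_, hind, ?_⟩
        · show 0 < f (P.root (negIdx (P := P) (P.reflectionPerm a j)))
          rw [f_root_negIdx]; linarith
        · rw [root_negIdx, root_reflection_perm', root_reflection_perm', hd, hpd]
          module
      · -- f(root a - root j) > 0 : root a = (root a - root j) + root j decomposes a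
        refine ha.2 ⟨P.reflectionPerm j a, j, hgt2, hj, ?_⟩
        rw [hsja]; module

end Lemmas2

section Lemmas3
variable {P} {f}

lemma tworho_eq_sum (k : ι) [DecidablePred (Pos P f)] :
    tworho P f k = ∑ i ∈ Finset.univ.filter (Pos P f), P.pairing i k := by
  rw [tworho, Finset.sum_filter]
  exact Finset.sum_congr rfl fun i _ => by
    simp only [Pos]
    split <;> rename_i h <;> [exact (if_pos h).symm; exact (if_neg h).symm]

lemma pairing_perm_right_self (a i : ι) :
    P.pairing (P.reflectionPerm a i) a = - P.pairing i a := by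
  rw [pairing_perm_left, P.pairing_same]; ring

lemma perm_ne_of_pos {a i : ι} (hapos : Pos P f a) (hi : Pos P f i)
    (h : P.reflectionPerm a i = a) : False := by
  have h1 : P.root (P.reflectionPerm a i) = P.root a := by rw [h]
  rw [P.root_reflectionPerm] at h1
  have h2 : P.root i = P.reflection a (P.root a) := by rw [← h1, P.reflection_same]
  rw [P.reflection_apply_self] at h2
  have hi' : 0 < f (P.root i) := hi
  have ha' : 0 < f (P.root a) := hapos
  rw [h2, map_neg] at hi'
  linarith

lemma tworho_simple (hP : P.IsCrystallographic) (hred : Reduced P) (hreg : Regular P f)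
    {a : ι} (ha : IsSimple P f a) : tworho P f a = 2 := by
  classical
  rw [tworho_eq_sum]
  have hamem : a ∈ Finset.univ.filter (Pos P f) := by
    simp only [Finset.mem_filter, Finset.mem_univ, true_and]; exact ha.1
  rw [← Finset.add_sum_erase _ _ hamem, P.pairing_same]
  have hzero : ∑ i ∈ (Finset.univ.filter (Pos P f)).erase a, P.pairing i a = 0 := by
    refine Finset.sum_involution (fun i _ => P.reflectionPerm a i) ?_ ?_ ?_ ?_
    · intro i hi
      rw [pairing_perm_right_self]; ring
    · intro i hi hne
      intro hfix
      apply hne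
      have := congrArg (fun m => P.root m) hfix
      simp only [root_reflection_perm'] at this
      have hsmul : P.pairing i a • P.root a = 0 := sub_eq_self.mp this
      rcases smul_eq_zero.mp hsmul with h | h
      · rw [h]
      · exact absurd h (P.ne_zero a)
    · intro i hi
      simp only [Finset.mem_erase, Finset.mem_filter, Finset.mem_univ, true_and] at hi ⊢
      refine ⟨fun h => perm_ne_of_pos ha.1 hi.2 h, ?_⟩
      exact pos_reflection_of_simple hP hred hreg ha i hi.2 hi.1
    · intro i hi
      exact P.reflectionPerm_self a i
  rw [hzero, add_zero]

end Lemmas3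

section Lemmas4
variable {P} {f}

lemma tworho_even (hP : P.IsCrystallographic) (hred : Reduced P) (hreg : Regular P f)
    (k : ι) : ∃ m : ℤ, tworho P f k = 2 * (m : ℝ) := by
  classical
  choose z hz using fun i => pairing_int hP i k
  have hT : tworho P f k = ((∑ i ∈ Finset.univ.filter (Pos P f), z i : ℤ) : ℝ) := by
    rw [tworho_eq_sum]
    push_cast
    exact Finset.sum_congr rfl fun i _ => (hz i).symm
  set T : ℤ := ∑ i ∈ Finset.univ.filter (Pos P f), z i with hTdef
  suffices hz2 : (T : ZMod 2) = 0 by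
    have hdvd : ((2 : ℕ) : ℤ) ∣ T := (ZMod.intCast_zmod_eq_zero_iff_dvd T 2).mp hz2
    obtain ⟨m, hm⟩ := hdvd
    refine ⟨m, ?_⟩
    rw [hT, hm]; push_cast; ring
  have hcast : ((T : ZMod 2)) = ∑ i ∈ Finset.univ.filter (Pos P f), ((z i : ZMod 2)) := by
    rw [hTdef]; push_cast; rfl
  rw [hcast, ← Finset.sum_filter_add_sum_filter_not (Finset.univ.filter (Pos P f))
    (fun i => Pos P f (P.reflectionPerm k i))]
  have htau_root : ∀ m : ι, P.root (negIdx (P := P) (P.reflectionPerm k m))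
      = - P.reflection k (P.root m) := by
    intro m; rw [root_negIdx, P.root_reflectionPerm]
  have hfix_even : ∀ i : ι, Pos P f i →
      negIdx (P := P) (P.reflectionPerm k i) = i →
      (z i : ZMod 2) = 0 := by
    intro i hipos hfix
    have hEq : - (P.root i - P.pairing i k • P.root k) = P.root i := by
      have h0 := congrArg (fun m => P.root m) hfix
      rw [root_negIdx, root_reflection_perm'] at h0
      exact h0
    have h2 : (2 : ℝ) • P.root i = P.pairing i k • P.root k := by
      linear_combination (norm := module) -hEq
    have hhalf : P.root i = (P.pairing i k / 2) • P.root k := by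
      calc P.root i = (1/2 : ℝ) • ((2:ℝ) • P.root i) := by rw [smul_smul]; norm_num
      _ = (1/2 : ℝ) • (P.pairing i k • P.root k) := by rw [h2]
      _ = (P.pairing i k / 2) • P.root k := by rw [smul_smul]; ring_nf
    rcases prop_resolve hP hred hhalf with rfl | hcase
    · -- i = k : z k = 2
      have h2' : z i = 2 := by
        have : (z i : ℝ) = ((2:ℤ) : ℝ) := by rw [hz i, P.pairing_same]; norm_num
        exact_mod_cast this
      rw [h2']; rfl
    · -- root i = - root k : z i = -2
      have h2' : z i = -2 := by
        have hp : P.pairing i k = -2 := by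
          rw [← P.root_coroot'_eq_pairing, hcase, map_neg, P.root_coroot'_eq_pairing,
            P.pairing_same]
        have : (z i : ℝ) = ((-2:ℤ) : ℝ) := by rw [hz i, hp]; norm_num
        exact_mod_cast this
      rw [h2']; rfl
  have hA : ∑ i ∈ (Finset.univ.filter (Pos P f)).filter
      (fun i => Pos P f (P.reflectionPerm k i)), ((z i : ZMod 2)) = 0 := by
    refine Finset.sum_involution (fun i _ => P.reflectionPerm k i) ?_ ?_ ?_ ?_
    · intro i hi
      have hzneg : z (P.reflectionPerm k i) = - z i := by
        have : (z (P.reflectionPerm k i) : ℝ) = ((- z i : ℤ) : ℝ) := by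
          rw [hz, pairing_perm_right_self, ← hz i]; push_cast; ring
        exact_mod_cast this
      rw [hzneg]; push_cast; ring
    · intro i hi hne hfix
      apply hne
      have h0 := congrArg (fun m => P.root m) hfix
      simp only [root_reflection_perm'] at h0
      have hsmul : P.pairing i k • P.root k = 0 := sub_eq_self.mp h0
      rcases smul_eq_zero.mp hsmul with h | h
      · have : z i = 0 := by
          have : (z i : ℝ) = ((0:ℤ) : ℝ) := by rw [hz i, h]; norm_num
          exact_mod_cast this
        rw [this]; rfl
      · exact absurd h (P.ne_zero k)
    · intro i hi
      simp only [Finset.mem_filter, Finset.mem_univ, true_and] at hi ⊢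
      exact ⟨hi.2, by rw [P.reflectionPerm_self]; exact hi.1⟩
    · intro i hi
      exact P.reflectionPerm_self k i
  have hB : ∑ i ∈ (Finset.univ.filter (Pos P f)).filter
      (fun i => ¬ Pos P f (P.reflectionPerm k i)), ((z i : ZMod 2)) = 0 := by
    refine Finset.sum_involution
      (fun i _ => negIdx (P := P) (P.reflectionPerm k i)) ?_ ?_ ?_ ?_
    · intro i hi
      have hzeq : z (negIdx (P := P) (P.reflectionPerm k i)) = z i := by
        have : (z (negIdx (P := P) (P.reflectionPerm k i)) : ℝ) = ((z i : ℤ) : ℝ) := by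
          rw [hz, pairing_negIdx_left, pairing_perm_right_self, ← hz i]; push_cast; ring
        exact_mod_cast this
      rw [hzeq, CharTwo.add_self_eq_zero]
    · intro i hi hne hfix
      simp only [Finset.mem_filter, Finset.mem_univ, true_and] at hi
      exact absurd (hfix_even i hi.1 hfix) hne
    · intro i hi
      simp only [Finset.mem_filter, Finset.mem_univ, true_and] at hi ⊢
      obtain ⟨hipos, hineg⟩ := hi
      have hlt : f (P.root (P.reflectionPerm k i)) < 0 :=
        lt_of_le_of_ne (not_lt.mp hineg) (hreg _)
      constructor
      · show 0 < f (P.root _)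
        rw [f_root_negIdx]; linarith
      · show ¬ (0 < f (P.root _))
        have hroot : P.root (P.reflectionPerm k (negIdx (P := P) (P.reflectionPerm k i)))
            = - P.root i := by
          rw [P.root_reflectionPerm, root_negIdx, P.root_reflectionPerm, map_neg,
            P.reflection_same]
        rw [hroot, map_neg]
        have : 0 < f (P.root i) := hipos
        linarith
    · intro i hi
      apply P.root.injective
      rw [htau_root, root_negIdx, P.root_reflectionPerm, map_neg, P.reflection_same, neg_neg]
  rw [hA, hB, add_zero]

end Lemmas4

section Lemmas5
variable {P} {f}

lemma pathEnd_nil (w : V ≃ₗ[ℝ] V) : pathEnd P w [] = w := mul_one w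

lemma pathEnd_cons (w : V ≃ₗ[ℝ] V) (k : ι) (ks : List ι) :
    pathEnd P w (k :: ks) = pathEnd P (w * refl P k) ks := by
  simp [pathEnd, mul_assoc]

lemma pathEnd_append (w : V ≃ₗ[ℝ] V) (ks ks' : List ι) :
    pathEnd P w (ks ++ ks') = pathEnd P (pathEnd P w ks) ks' := by
  simp [pathEnd, mul_assoc]

lemma validPath_append : ∀ (ks : List ι) (ks' : List ι) (w : V ≃ₗ[ℝ] V),
    ValidPath P f w ks → ValidPath P f (pathEnd P w ks) ks' →
    ValidPath P f w (ks ++ ks') := by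
  intro ks
  induction ks with
  | nil => intro ks' w _ h2; rw [pathEnd_nil] at h2; exact h2
  | cons a t ih =>
      intro ks' w h1 h2
      exact ⟨h1.1, ih ks' _ h1.2 (by rw [← pathEnd_cons]; exact h2)⟩

lemma dist_le_of_path {w v : V ≃ₗ[ℝ] V} {ks : List ι} (h : ValidPath P f w ks)
    (he : pathEnd P w ks = v) : dist P f w v ≤ ks.length :=
  Nat.sInf_le ⟨ks, h, he, rfl⟩

lemma mul_refl_refl (w : V ≃ₗ[ℝ] V) (i : ι) : w * refl P i * refl P i = w := by
  rw [mul_assoc, refl_mul_self, mul_one]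

lemma len_sub_one_le (w : V ≃ₗ[ℝ] V) {i : ι} (hi : IsSimple P f i) (hw : InW P f w) :
    len P f w ≤ len P f (w * refl P i) + 1 := by
  obtain ⟨l, hl, hll⟩ := (hw.mul (⟨[i], ⟨by simpa using hi, by simp⟩⟩ : InW P f (refl P i))).exists_wrd
  have := len_le_of_wrd (hl.mul_refl hi)
  rw [List.length_append, List.length_singleton, hll] at this
  rwa [mul_refl_refl] at this

/-- Descent to the identity entirely within the quantum Bruhat graph. -/
lemma exists_desc (hP : P.IsCrystallographic) (hred : Reduced P) (hreg : Regular P f) :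
    ∀ (n : ℕ) (v : V ≃ₗ[ℝ] V), InW P f v → len P f v = n →
    ∃ ks, ValidPath P f v ks ∧ pathEnd P v ks = 1 ∧ ks.length = n := by
  intro n
  induction n with
  | zero =>
      intro v hv h0
      exact ⟨[], trivial, by rw [pathEnd_nil]; exact len_eq_zero hv h0, rfl⟩
  | succ n ih =>
      intro v hv hn
      obtain ⟨l, hl, hll⟩ := hv.exists_wrd
      rcases l.eq_nil_or_concat with rfl | ⟨l', i, rfl⟩
      · rw [hn] at hll; simp at hll
      · rw [List.concat_eq_append] at hl hll
        have hisimp : IsSimple P f i := hl.1 i (by simp)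
        have hl' : Wrd P f (v * refl P i) l' := by
          refine ⟨fun m hm => hl.1 m (by simp [hm]), ?_⟩
          have h2 := hl.2
          rw [List.map_append, List.prod_append] at h2
          simp only [List.map_cons, List.prod_cons, List.map_nil, List.prod_nil, mul_one] at h2
          rw [← h2, mul_refl_refl]
        have hlen' : l'.length = n := by
          have := hll
          rw [List.length_append, List.length_singleton, hn] at this
          omega
        have hle : len P f (v * refl P i) ≤ n := by
          have := len_le_of_wrd hl'
          omega
        have hge : n ≤ len P f (v * refl P i) := by
          have := len_sub_one_le v hisimp hv
          omega
        have hlen : len P f (v * refl P i) = n := le_antisymm hle hge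
        have hstep : DownStep P f v i := by
          refine ⟨hisimp.1, ?_⟩
          rw [hlen, hn, tworho_simple hP hred hreg hisimp]
          push_cast; ring
        obtain ⟨ks, hval, hend, hkl⟩ := ih (v * refl P i) ⟨l', hl'⟩ hlen
        exact ⟨i :: ks, ⟨Or.inr hstep, hval⟩, by rw [pathEnd_cons]; exact hend, by simp [hkl]⟩

/-- Descent along a length-additive right factor. -/
lemma desc_by_word (hP : P.IsCrystallographic) (hred : Reduced P) (hreg : Regular P f) :
    ∀ (l : List ι) (x : V ≃ₗ[ℝ] V), InW P f x → (∀ i ∈ l, IsSimple P f i) →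
    len P f (x * (l.map (refl P)).prod) = len P f x + l.length →
    ∃ ks, ValidPath P f (x * (l.map (refl P)).prod) ks ∧
      pathEnd P (x * (l.map (refl P)).prod) ks = x ∧ ks.length = l.length := by
  intro l
  induction l using List.reverseRecOn with
  | nil => intro x hx _ _; exact ⟨[], trivial, by rw [pathEnd_nil]; simp, rfl⟩
  | append_singleton l' i ih =>
      intro x hx hsimp hlen
      have hisimp : IsSimple P f i := hsimp i (by simp)
      have hprod : (List.map (refl P) (l' ++ [i])).prod
          = (l'.map (refl P)).prod * refl P i := by
        rw [List.map_append, List.prod_append]; simp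
      set y := x * (l'.map (refl P)).prod with hy
      have hxy : x * (List.map (refl P) (l' ++ [i])).prod = y * refl P i := by
        rw [hprod, hy, mul_assoc]
      have hinwy : InW P f y := hx.mul ⟨l', fun m hm => hsimp m (by simp [hm]), rfl⟩
      have hley : len P f y ≤ len P f x + l'.length := by
        have := len_mul_le hx ⟨l', fun m hm => hsimp m (by simp [hm]), rfl⟩
        have h2 := len_le_of_wrd (P := P) (f := f)
          (w := (l'.map (refl P)).prod) ⟨fun m hm => hsimp m (by simp [hm]), rfl⟩
        rw [← hy] at this
        omega
      have hlen1 : len P f (y * refl P i) = len P f x + l'.length + 1 := by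
        rw [← hxy, hlen, List.length_append, List.length_singleton]
        omega
      have hgey : len P f x + l'.length ≤ len P f y := by
        have := len_sub_one_le (y * refl P i) hisimp (hinwy.mul ⟨[i], by simpa using hisimp,
          by simp⟩)
        rw [mul_refl_refl] at this
        omega
      have hleny : len P f y = len P f x + l'.length := le_antisymm hley hgey
      have hstep : DownStep P f (y * refl P i) i := by
        refine ⟨hisimp.1, ?_⟩
        rw [mul_refl_refl, hleny, hlen1, tworho_simple hP hred hreg hisimp]
        push_cast; ring
      obtain ⟨ks, hval, hend, hkl⟩ := ih x hx (fun m hm => hsimp m (by simp [hm])) (by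
        rw [← hy, hleny])
      refine ⟨i :: ks, ?_, ?_, ?_⟩
      · rw [hxy]
        exact ⟨Or.inr hstep, by rw [mul_refl_refl]; exact hval⟩
      · rw [hxy, pathEnd_cons, mul_refl_refl]; exact hend
      · simp [hkl]

lemma three_le_len (hP : P.IsCrystallographic) (hred : Reduced P) (hreg : Regular P f)
    {k : ι} (hk : Pos P f k) (hns : ¬ IsSimple P f k) (hInW : InW P f (refl P k))
    (hlen : (len P f (refl P k) : ℝ) = tworho P f k - 1) : 3 ≤ len P f (refl P k) := by
  have h0 : len P f (refl P k) ≠ 0 := by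
    intro h
    have h1 : refl P k = 1 := len_eq_zero hInW h
    have h2 : P.reflection k (P.root k) = P.root k := by
      have := congrArg (fun w : V ≃ₗ[ℝ] V => w (P.root k)) h1
      simpa [refl] using this
    rw [P.reflection_apply_self] at h2
    have h3 : (2:ℝ) • P.root k = 0 := by linear_combination (norm := module) -h2
    rcases smul_eq_zero.mp h3 with hc | hc
    · norm_num at hc
    · exact P.ne_zero k hc
  have h1 : len P f (refl P k) ≠ 1 := by
    intro h
    obtain ⟨l, hl, hll⟩ := hInW.exists_wrd
    rw [h] at hll
    obtain ⟨i, rfl⟩ := List.length_eq_one_iff.mp hll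
    have hisimp : IsSimple P f i := hl.1 i (by simp)
    have heq : P.reflection i = P.reflection k := by
      have := hl.2
      simpa [refl] using this
    have hEq : P.root i - P.pairing i k • P.root k = - P.root i := by
      have := congrArg (fun w : V ≃ₗ[ℝ] V => w (P.root i)) heq
      rw [P.reflection_apply_self, P.reflection_apply_root] at this
      rw [this]
    have h2 : (2 : ℝ) • P.root i = P.pairing i k • P.root k := by
      linear_combination (norm := module) hEq
    have hhalf : P.root i = (P.pairing i k / 2) • P.root k := by
      calc P.root i = (1/2 : ℝ) • ((2:ℝ) • P.root i) := by rw [smul_smul]; norm_num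
      _ = (1/2 : ℝ) • (P.pairing i k • P.root k) := by rw [h2]
      _ = (P.pairing i k / 2) • P.root k := by rw [smul_smul]; ring_nf
    rcases prop_resolve hP hred hhalf with rfl | hcase
    · exact hns hisimp
    · have hik : 0 < f (P.root i) := hisimp.1
      have hkk : 0 < f (P.root k) := hk
      rw [hcase, map_neg] at hik
      linarith
  obtain ⟨m, hm⟩ := tworho_even hP hred hreg k
  have h2 : 2 ≤ len P f (refl P k) := by omega
  have h2' : (2 : ℝ) ≤ (len P f (refl P k) : ℝ) := by exact_mod_cast h2
  have hm2 : 2 ≤ m := by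
    have : (3 : ℝ) ≤ 2 * (m : ℝ) := by rw [← hm]; linarith [hlen, h2']
    by_contra hc
    push_neg at hc
    have hm1 : m ≤ 1 := by omega
    have : (m : ℝ) ≤ 1 := by exact_mod_cast hm1
    linarith
  have : (3 : ℝ) ≤ (len P f (refl P k) : ℝ) := by
    rw [hlen, hm]
    have : (2 : ℝ) ≤ (m : ℝ) := by exact_mod_cast hm2
    linarith
  exact_mod_cast this

end Lemmas5
/-- if `w` is small-height-containing, then `d_Γ(w, 1) ≤ ℓ(w) - 2`. -/
theorem dist_le_of_smallHeightContaining (hP : P.IsCrystallographic) (hred : Reduced P) (hreg : Regular P f)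
    (w : V ≃ₗ[ℝ] V) (hw : InW P f w) (hshc : ¬ SmallHeightAvoiding P f w) :
    dist P f w 1 + 2 ≤ len P f w := by
  classical
  obtain ⟨k, hk, hns, hlenk, u, u', hu, hu', heq, hadd⟩ := not_not.mp hshc
  subst heq
  have hs : InW P f (refl P k) := by
    have h1 : refl P k = u⁻¹ * (u * refl P k * u') * u'⁻¹ := by group
    rw [h1]
    exact (hu.inv.mul hw).mul hu'.inv
  have h3 : 3 ≤ len P f (refl P k) := three_le_len hP hred hreg hk hns hs hlenk
  have hus : InW P f (u * refl P k) := hu.mul hs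
  have hlenus : len P f (u * refl P k) = len P f u + len P f (refl P k) := by
    have hle := len_mul_le hu hs
    have hge : len P f u + len P f (refl P k) ≤ len P f (u * refl P k) := by
      have := len_mul_le hus hu'
      omega
    omega
  obtain ⟨l', hl', hll'⟩ := hu'.exists_wrd
  obtain ⟨ks1, hv1, he1, hk1⟩ := desc_by_word hP hred hreg l' (u * refl P k) hus hl'.1 (by
    rw [hl'.2, hll', hlenus]
    omega)
  rw [hl'.2] at hv1 he1
  rw [hll'] at hk1
  have hdstep : DownStep P f (u * refl P k) k := by
    refine ⟨hk, ?_⟩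
    rw [mul_refl_refl, hlenus]
    have htr : tworho P f k = (len P f (refl P k) : ℝ) + 1 := by linarith [hlenk]
    rw [htr]
    push_cast; ring
  obtain ⟨ks3, hv3, he3, hk3⟩ := exists_desc hP hred hreg (len P f u) u hu rfl
  have hv2 : ValidPath P f (u * refl P k) (k :: ks3) := by
    refine ⟨Or.inr hdstep, ?_⟩
    rw [mul_refl_refl]
    exact hv3
  have he2 : pathEnd P (u * refl P k) (k :: ks3) = 1 := by
    rw [pathEnd_cons, mul_refl_refl]; exact he3
  have hval : ValidPath P f (u * refl P k * u') (ks1 ++ (k :: ks3)) :=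
    validPath_append _ _ _ hv1 (by rw [he1]; exact hv2)
  have hend : pathEnd P (u * refl P k * u') (ks1 ++ (k :: ks3)) = 1 := by
    rw [pathEnd_append, he1]; exact he2
  have hdist := dist_le_of_path hval hend
  rw [List.length_append, List.length_cons, hk1, hk3] at hdist
  omega

end QBG
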